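/- Let r > 0, and suppose Φ = ∫₀^{g} (1 + 2 sin²(ry)/r²)^{1/2} dy for some g ∈ ℝ with r ≪ 1. If |g| ≥ c/r for some constant c > 0, then |Φ| ≥ c'·|g|/r for a constant c' > 0 depending only on c; and if 1 ≤ |g| ≤ 1/r, then |Φ| ≥ c'' g² for an absolute constant c'' > 0. In particular, |Φ| ≤ M r^{−3/2} implies |g| ≤ C(M) r^{−3/4} for small r. -/
import Mathlib

open Real intervalIntegral

noncomputable def Phi (r g : ℝ) : ℝ :=
  ∫ y in (0:ℝ)..g, Real.sqrt (1 + 2 * Real.sin (r * y) ^ 2 / r ^ 2)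

lemma phi_cont (r : ℝ) : Continuous fun y : ℝ => Real.sqrt (1 + 2 * Real.sin (r * y) ^ 2 / r ^ 2) := by
  apply Continuous.sqrt
  fun_prop

lemma Phi_neg (r g : ℝ) : Phi r (-g) = - Phi r g := by
  unfold Phi
  have h : (∫ y in (0:ℝ)..(-g), Real.sqrt (1 + 2 * Real.sin (r * y) ^ 2 / r ^ 2))
      = ∫ y in (0:ℝ)..(-g), Real.sqrt (1 + 2 * Real.sin (r * (-y)) ^ 2 / r ^ 2) := by
    apply intervalIntegral.integral_congr
    intro y _
    simp [mul_neg]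
  rw [h, intervalIntegral.integral_comp_neg (a := (0:ℝ)) (b := -g)
      (f := fun y => Real.sqrt (1 + 2 * Real.sin (r * y) ^ 2 / r ^ 2))]
  rw [neg_neg, neg_zero]
  exact intervalIntegral.integral_symm 0 g

lemma abs_Phi_abs (r g : ℝ) : |Phi r g| = |Phi r (|g|)| := by
  rcases le_or_gt 0 g with h | h
  · rw [abs_of_nonneg h]
  · rw [abs_of_neg h, Phi_neg, abs_neg]

lemma quad_bound {r g : ℝ} (hr : 0 < r) (hg : 0 ≤ g) (hgr : g ≤ 1 / r) :
    g ^ 2 / 4 ≤ Phi r g := by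
  have pi4 := Real.pi_le_four
  have pi3 := Real.pi_gt_three
  have key : ∀ y ∈ Set.Icc (0:ℝ) g, y / 2 ≤ Real.sqrt (1 + 2 * Real.sin (r * y) ^ 2 / r ^ 2) := by
    intro y ⟨hy0, hyg⟩
    have hry0 : 0 ≤ r * y := by positivity
    have hry : r * y ≤ 1 := by
      have : g * r ≤ 1 := (le_div_iff₀ hr).1 hgr
      nlinarith
    have hsin : r * y / 2 ≤ Real.sin (r * y) := by
      have h1 : r * y ≤ π / 2 := by linarith
      have h2 := Real.mul_le_sin hry0 h1
      have h3 : r * y / 2 ≤ 2 / π * (r * y) := by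
        have hhalf : (1:ℝ) / 2 ≤ 2 / π := by
          rw [le_div_iff₀ Real.pi_pos]; linarith
        nlinarith
      linarith
    have hsq : (y / 2) ^ 2 ≤ 1 + 2 * Real.sin (r * y) ^ 2 / r ^ 2 := by
      have h4 : 2 * (r * y / 2) ^ 2 / r ^ 2 ≤ 2 * Real.sin (r * y) ^ 2 / r ^ 2 := by
        apply div_le_div_of_nonneg_right _ (by positivity)  -- maybe wrong name
        nlinarith [Real.sin_nonneg_of_nonneg_of_le_pi hry0 (by linarith)]
      have h5 : 2 * (r * y / 2) ^ 2 / r ^ 2 = y ^ 2 / 2 := by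
        field_simp
      nlinarith
    calc y / 2 = Real.sqrt ((y / 2) ^ 2) := (Real.sqrt_sq (by linarith)).symm
      _ ≤ _ := Real.sqrt_le_sqrt hsq
  have h1 : (∫ y in (0:ℝ)..g, y / 2) ≤ Phi r g := by
    apply intervalIntegral.integral_mono_on hg
      (by apply Continuous.intervalIntegrable; fun_prop)
      ((phi_cont r).intervalIntegrable _ _) key
  have h2 : (∫ y in (0:ℝ)..g, y / 2) = g ^ 2 / 4 := by
    simp [intervalIntegral.integral_div, integral_id]
    ring
  linarith

lemma sinsq_bound {r g : ℝ} (hr : 0 < r) (hg : 0 ≤ g) :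
    (g / 2 - 1 / (4 * r)) / r ≤ Phi r g := by
  have key : ∀ y ∈ Set.Icc (0:ℝ) g,
      Real.sin (r * y) ^ 2 / r ≤ Real.sqrt (1 + 2 * Real.sin (r * y) ^ 2 / r ^ 2) := by
    intro y _
    have hs2 : Real.sin (r * y) ^ 2 ≤ 1 := Real.sin_sq_le_one _
    have hr' : (0:ℝ) < r ^ 2 := by positivity
    have hsq : (Real.sin (r * y) ^ 2 / r) ^ 2 ≤ 1 + 2 * Real.sin (r * y) ^ 2 / r ^ 2 := by
      have h4 : (Real.sin (r * y) ^ 2 / r) ^ 2 = Real.sin (r * y) ^ 4 / r ^ 2 := by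
        field_simp
      rw [h4]
      have h5 : Real.sin (r * y) ^ 4 ≤ 2 * Real.sin (r * y) ^ 2 := by
        nlinarith [sq_nonneg (Real.sin (r * y))]
      have h6 : Real.sin (r * y) ^ 4 / r ^ 2 ≤ 2 * Real.sin (r * y) ^ 2 / r ^ 2 :=
        (div_le_div_iff_of_pos_right hr').2 h5
      linarith
    calc Real.sin (r * y) ^ 2 / r = Real.sqrt ((Real.sin (r * y) ^ 2 / r) ^ 2) :=
        (Real.sqrt_sq (by positivity)).symm
      _ ≤ _ := Real.sqrt_le_sqrt hsq
  have h1 : (∫ y in (0:ℝ)..g, Real.sin (r * y) ^ 2 / r) ≤ Phi r g := by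
    apply intervalIntegral.integral_mono_on hg
      (by apply Continuous.intervalIntegrable; fun_prop)
      ((phi_cont r).intervalIntegrable _ _) key
  have h2 : (∫ y in (0:ℝ)..g, Real.sin (r * y) ^ 2)
      = r⁻¹ * ((Real.sin (r * 0) * Real.cos (r * 0) - Real.sin (r * g) * Real.cos (r * g) + r * g - r * 0) / 2) := by
    rw [intervalIntegral.integral_comp_mul_left (fun x => Real.sin x ^ 2) hr.ne', integral_sin_sq]
    simp
  have h3 : Real.sin (r * g) * Real.cos (r * g) ≤ 1 / 2 := by
    have := Real.sin_two_mul (r * g)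
    have := Real.sin_le_one (2 * (r * g))
    linarith
  have h4 : (∫ y in (0:ℝ)..g, Real.sin (r * y) ^ 2 / r)
      = (∫ y in (0:ℝ)..g, Real.sin (r * y) ^ 2) / r := intervalIntegral.integral_div _ _
  rw [h4, h2] at h1
  simp only [mul_zero, Real.sin_zero, Real.cos_zero, zero_mul, sub_zero] at h1
  set s := Real.sin (r * g) * Real.cos (r * g) with hs
  have key2 : (g / 2 - 1 / (4 * r)) ≤ r⁻¹ * ((0 - s + r * g) / 2) := by
    have he : r⁻¹ * ((0 - s + r * g) / 2) - (g / 2 - 1 / (4 * r)) = (1 / 2 - s) / (2 * r) := by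
      field_simp; ring
    nlinarith [div_nonneg (by linarith : (0:ℝ) ≤ 1 / 2 - s) (by positivity : (0:ℝ) ≤ 2 * r)]
  exact le_trans (by gcongr) h1

theorem skyrme_stmt16 :
    (∀ c > (0:ℝ), ∃ c' > (0:ℝ), ∃ r₁ > (0:ℝ), ∀ r : ℝ, 0 < r → r < r₁ →
      ∀ g : ℝ, c / r ≤ |g| → c' * |g| / r ≤ |Phi r g|) ∧
    (∃ c'' > (0:ℝ), ∃ r₁ > (0:ℝ), ∀ r : ℝ, 0 < r → r < r₁ →
      ∀ g : ℝ, |g| ≤ 1 / r → 1 ≤ |g| → c'' * g ^ 2 ≤ |Phi r g|) ∧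
    (∀ M > (0:ℝ), ∃ C > (0:ℝ), ∃ r₁ > (0:ℝ), ∀ r : ℝ, 0 < r → r < r₁ →
      ∀ g : ℝ, |Phi r g| ≤ M * r ^ (-(3/2) : ℝ) → |g| ≤ C * r ^ (-(3/4) : ℝ)) := by
  refine ⟨?_, ?_, ?_⟩
  · -- part 1
    intro c hc
    refine ⟨min c 1 / 4, by positivity, 1, one_pos, ?_⟩
    intro r hr _ g hcg
    rw [abs_Phi_abs]
    set a := |g| with ha
    have ha0 : 0 ≤ a := abs_nonneg g
    have hP : Phi r a ≤ |Phi r a| := le_abs_self _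
    rcases le_or_gt a (1 / r) with hle | hlt
    · have hq := quad_bound hr ha0 hle
      have e1 : min c 1 / 4 * a / r ≤ c / 4 * a / r := by
        gcongr
        · exact min_le_left _ _
      have e2 : c / 4 * a / r = c / r * a / 4 := by ring
      have e3 : c / r * a / 4 ≤ a * a / 4 := by nlinarith
      have e4 : a * a / 4 = a ^ 2 / 4 := by ring
      linarith
    · have hq := sinsq_bound hr ha0 (g := a)
      have h14 : 1 / (4 * r) ≤ a / 4 := by
        rw [div_le_div_iff₀ (by positivity) (by positivity)]
        have : 1 / r ≤ a := hlt.le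
        rw [div_le_iff₀ hr] at this
        nlinarith
      have e0 : a / 4 / r ≤ (a / 2 - 1 / (4 * r)) / r := by
        gcongr
        linarith
      have e1 : min c 1 / 4 * a / r ≤ 1 / 4 * a / r := by
        gcongr
        · exact min_le_right _ _
      have e2 : 1 / 4 * a / r = a / 4 / r := by ring
      linarith
  · -- part 2
    refine ⟨1 / 4, by norm_num, 1, one_pos, ?_⟩
    intro r hr _ g hle _
    rw [abs_Phi_abs]
    have hq := quad_bound hr (abs_nonneg g) hle
    have : |g| ^ 2 = g ^ 2 := sq_abs g
    have hP : Phi r |g| ≤ |Phi r (|g|)| := le_abs_self _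
    linarith
  · -- part 3
    intro M hM
    refine ⟨4 * (M + 1), by positivity, 1, one_pos, ?_⟩
    intro r hr hr1 g hPhi
    set C := 4 * (M + 1) with hC
    have hC0 : (0:ℝ) < C := by positivity
    by_contra hcon
    push_neg at hcon
    rw [abs_Phi_abs] at hPhi
    set a := |g| with ha
    have ha0 : 0 ≤ a := abs_nonneg g
    have hr34 : (0:ℝ) < r ^ (-(3/4) : ℝ) := Real.rpow_pos_of_pos hr _
    have hr32 : (0:ℝ) < r ^ (-(3/2) : ℝ) := Real.rpow_pos_of_pos hr _
    have hsq : (r ^ (-(3/4) : ℝ)) ^ 2 = r ^ (-(3/2) : ℝ) := by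
      rw [← Real.rpow_natCast (r ^ (-(3/4) : ℝ)) 2, ← Real.rpow_mul hr.le]
      norm_num
    have hP : Phi r a ≤ M * r ^ (-(3/2) : ℝ) := le_trans (le_abs_self _) hPhi
    rcases le_or_gt a (1 / r) with hle | hlt
    · have hq := quad_bound hr ha0 hle
      have h2 : (C * r ^ (-(3/4) : ℝ)) ^ 2 < a ^ 2 := by
        have hms := mul_self_lt_mul_self (by positivity : (0:ℝ) ≤ C * r ^ (-(3/4) : ℝ)) hcon
        nlinarith [hms]
      have h3 : (C * r ^ (-(3/4) : ℝ)) ^ 2 = C ^ 2 * r ^ (-(3/2) : ℝ) := by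
        rw [mul_pow, hsq]
      have hkey : C ^ 2 * r ^ (-(3/2) : ℝ) < 4 * M * r ^ (-(3/2) : ℝ) := by
        nlinarith
      have hC2 : 4 * M ≤ C ^ 2 := by nlinarith
      nlinarith [mul_nonneg (by linarith : (0:ℝ) ≤ C ^ 2 - 4 * M) hr32.le]
    · have hq := sinsq_bound hr ha0 (g := a)
      have h14 : 1 / (4 * r) ≤ a / 4 := by
        rw [div_le_div_iff₀ (by positivity) (by positivity)]
        have : 1 / r ≤ a := hlt.le
        rw [div_le_iff₀ hr] at this
        nlinarith
      have e0 : a / 4 / r ≤ (a / 2 - 1 / (4 * r)) / r := by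
        gcongr
        linarith
      have e1 : C * r ^ (-(3/4) : ℝ) / 4 / r < a / 4 / r := by
        gcongr
      have hmul : r ^ (-(3/4) : ℝ) * r⁻¹ = r ^ (-(7/4) : ℝ) := by
        rw [← Real.rpow_neg_one r, ← Real.rpow_add hr]
        norm_num
      have heq : C * r ^ (-(3/4) : ℝ) / 4 / r = C / 4 * r ^ (-(7/4) : ℝ) := by
        rw [← hmul]; ring
      have hmono : r ^ (-(3/2) : ℝ) ≤ r ^ (-(7/4) : ℝ) :=
        Real.rpow_le_rpow_of_exponent_ge hr hr1.le (by norm_num)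
      have hfin : C / 4 * r ^ (-(3/2) : ℝ) ≤ C / 4 * r ^ (-(7/4) : ℝ) := by
        gcongr
      have hCM : M < C / 4 := by rw [hC]; linarith
      have hlast : M * r ^ (-(3/2) : ℝ) < C / 4 * r ^ (-(3/2) : ℝ) :=
        mul_lt_mul_of_pos_right hCM hr32
      rw [heq] at e1
      linarith
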